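/- Let 0 < ε ≤ 1/2 and B be the 3×3 matrix with columns b₁ = (ε/2, ε/2, -ε), b₂ = (5ε/4, -3ε/4, -ε/2), b₃ = (1/(3ε²), 1/(3ε²), 1/(3ε²)), and Λ₂ = Bℤ³, Π = [-ε,ε]³. Then μ₁(Π, Λ₂) = 1 and μ₂(Π, Λ₂) = 5/4. -/

import Mathlib

open Matrix
open scoped BigOperators Pointwise

section aux

set_option maxHeartbeats 1000000 in
lemma keyA (ε μ : ℝ) (hε0 : 0 < ε) (hε : ε ≤ 1/2) (hμ0 : 0 < μ) (hμ : μ < 5/4)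
    (m n k : ℤ)
    (h1 : |ε/2*m + 5*ε/4*n + 1/(3*ε^2)*k| ≤ μ*ε)
    (h2 : |ε/2*m + -(3*ε/4)*n + 1/(3*ε^2)*k| ≤ μ*ε)
    (h3 : |(-ε)*m + -(ε/2)*n + 1/(3*ε^2)*k| ≤ μ*ε) :
    n = 0 ∧ k = 0 := by
  have hε2 : (0:ℝ) < 3*ε^2 := by positivity
  have hμε : μ*ε < 5/8 := by nlinarith
  have hμε2 : μ*ε < 5*ε/4 := by nlinarith
  have hdiv : ∀ {a b : ℝ}, ε*a ≤ ε*b → a ≤ b :=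
    fun h => (mul_le_mul_iff_right₀ hε0).mp h
  set t : ℝ := 1/(3*ε^2)*k with htdef
  have ht : k ≠ 0 → 4/3 ≤ |t| := by
    intro hk
    have h1k : (1:ℝ) ≤ |(k:ℝ)| := by exact_mod_cast Int.one_le_abs hk
    have h43 : (4:ℝ)/3 ≤ 1/(3*ε^2) := by rw [le_div_iff₀ hε2]; nlinarith
    rw [htdef, abs_mul, abs_of_pos (by positivity : (0:ℝ) < 1/(3*ε^2))]
    nlinarith [abs_nonneg (k:ℝ)]
  rcases abs_le.mp h1 with ⟨h1a, h1b⟩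
  rcases abs_le.mp h2 with ⟨h2a, h2b⟩
  rcases abs_le.mp h3 with ⟨h3a, h3b⟩
  clear h1 h2 h3
  have hn1 : (n:ℝ) ≤ μ := hdiv (by linarith)
  have hn2 : -μ ≤ (n:ℝ) := by have := hdiv (show ε*(-(n:ℝ)) ≤ ε*μ by linarith); linarith
  have hn1' : n < 2 := by exact_mod_cast show (n:ℝ) < 2 by linarith
  have hn2' : -2 < n := by exact_mod_cast show (-2:ℝ) < n by linarith
  interval_cases n <;> push_cast at h1a h1b h2a h2b h3a h3b
  · -- n = -1 : contradiction
    exfalso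
    have hm1 : (3:ℝ)/2 * m ≤ 2*μ - 1/4 := hdiv (by linarith)
    have hm2 : -(2*μ) + 7/4 ≤ (3:ℝ)/2 * m := by
      have := hdiv (show ε*(-(3/2 * (m:ℝ))) ≤ ε*(2*μ - 7/4) by linarith); linarith
    have hm1' : m < 2 := by exact_mod_cast show (m:ℝ) < 2 by linarith
    have hm2' : -1 < m := by exact_mod_cast show (-1:ℝ) < m by linarith
    interval_cases m <;> push_cast at h1a h1b h2a h2b h3a h3b <;>
        by_cases hk : k = 0
    · have ht0 : t = 0 := by simp [htdef, hk]
      linarith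
    · rcases abs_cases t with ⟨he, _⟩ | ⟨he, _⟩ <;> have := ht hk <;> linarith
    · have ht0 : t = 0 := by simp [htdef, hk]
      linarith
    · rcases abs_cases t with ⟨he, _⟩ | ⟨he, _⟩ <;> have := ht hk <;> linarith
  · -- n = 0
    have hm1 : (3:ℝ)/2 * m ≤ 2*μ := hdiv (by linarith)
    have hm2 : -(2*μ) ≤ (3:ℝ)/2 * m := by
      have := hdiv (show ε*(-(3/2 * (m:ℝ))) ≤ ε*(2*μ) by linarith); linarith
    have hm1' : m < 2 := by exact_mod_cast show (m:ℝ) < 2 by linarith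
    have hm2' : -2 < m := by exact_mod_cast show (-2:ℝ) < m by linarith
    have hk : k = 0 := by
      by_contra hk
      interval_cases m <;> push_cast at h1a h1b h2a h2b h3a h3b <;>
        rcases abs_cases t with ⟨he, _⟩ | ⟨he, _⟩ <;> have := ht hk <;> linarith
    exact ⟨rfl, hk⟩
  · -- n = 1 : contradiction
    exfalso
    have hm1 : (3:ℝ)/2 * m ≤ 2*μ - 7/4 := hdiv (by linarith)
    have hm2 : -(2*μ) + 1/4 ≤ (3:ℝ)/2 * m := by
      have := hdiv (show ε*(-(3/2 * (m:ℝ))) ≤ ε*(2*μ - 1/4) by linarith); linarith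
    have hm1' : m < 1 := by exact_mod_cast show (m:ℝ) < 1 by linarith
    have hm2' : -2 < m := by exact_mod_cast show (-2:ℝ) < m by linarith
    interval_cases m <;> push_cast at h1a h1b h2a h2b h3a h3b <;>
        by_cases hk : k = 0
    · have ht0 : t = 0 := by simp [htdef, hk]
      linarith
    · rcases abs_cases t with ⟨he, _⟩ | ⟨he, _⟩ <;> have := ht hk <;> linarith
    · have ht0 : t = 0 := by simp [htdef, hk]
      linarith
    · rcases abs_cases t with ⟨he, _⟩ | ⟨he, _⟩ <;> have := ht hk <;> linarith

lemma keyB (ε μ : ℝ) (hε0 : 0 < ε) (hε : ε ≤ 1/2) (hμ0 : 0 < μ) (hμ : μ < 1)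
    (m n k : ℤ)
    (h1 : |ε/2*m + 5*ε/4*n + 1/(3*ε^2)*k| ≤ μ*ε)
    (h2 : |ε/2*m + -(3*ε/4)*n + 1/(3*ε^2)*k| ≤ μ*ε)
    (h3 : |(-ε)*m + -(ε/2)*n + 1/(3*ε^2)*k| ≤ μ*ε) :
    m = 0 ∧ n = 0 ∧ k = 0 := by
  obtain ⟨hn, hk⟩ := keyA ε μ hε0 hε hμ0 (by linarith) m n k h1 h2 h3
  subst hn; subst hk
  push_cast at h3
  rw [show (-ε)*(m:ℝ) + -(ε/2)*0 + 1/(3*ε^2)*0 = -(ε*m) by ring, abs_neg,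
    abs_mul, abs_of_pos hε0] at h3
  have hm : |(m:ℝ)| < 1 := by
    nlinarith [abs_nonneg (m:ℝ)]
  have hm' : -1 < (m:ℝ) ∧ (m:ℝ) < 1 := abs_lt.mp hm
  have h1 : -1 < m := by exact_mod_cast hm'.1
  have h2 : m < 1 := by exact_mod_cast hm'.2
  exact ⟨by omega, rfl, rfl⟩

lemma mulVecB (ε : ℝ) (v : Fin 3 → ℝ) :
    (!![ε/2, 5*ε/4,  1/(3*ε^2);
        ε/2, -3*ε/4, 1/(3*ε^2);
        -ε,  -ε/2,   1/(3*ε^2)]).mulVec v =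
    ![ε/2*v 0 + 5*ε/4*v 1 + 1/(3*ε^2)*v 2,
      ε/2*v 0 + -(3*ε/4)*v 1 + 1/(3*ε^2)*v 2,
      (-ε)*v 0 + -(ε/2)*v 1 + 1/(3*ε^2)*v 2] := by
  funext i
  fin_cases i <;>
    simp [Matrix.mulVec, dotProduct, Fin.sum_univ_three] <;> ring

lemma memc {μ ε : ℝ} (hμ : 0 < μ) (x : Fin 3 → ℝ) :
    x ∈ μ • {z : Fin 3 → ℝ | ∀ i, |z i| ≤ ε} ↔ ∀ i, |x i| ≤ μ * ε := by
  rw [Set.mem_smul_set_iff_inv_smul_mem₀ hμ.ne']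
  simp only [Set.mem_setOf_eq, Pi.smul_apply, smul_eq_mul, abs_mul, abs_inv,
    abs_of_pos hμ]
  constructor
  · intro h i; have := h i; rw [inv_mul_le_iff₀ hμ] at this; linarith [this]
  · intro h i; rw [inv_mul_le_iff₀ hμ]; linarith [h i]

end aux

/-- The `k`-th successive minimum of a set `M ⊆ ℝ³` with respect to the lattice
`Bℤ³`: the infimum of `μ > 0` such that `μM` contains `k` linearly independent
lattice points. -/
noncomputable def succMin (k : ℕ) (B : Matrix (Fin 3) (Fin 3) ℝ)
    (M : Set (Fin 3 → ℝ)) : ℝ :=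
  sInf {μ : ℝ | 0 < μ ∧ ∃ w : Fin k → (Fin 3 → ℤ),
    LinearIndependent ℝ (fun i => B.mulVec (fun j => ((w i j : ℝ)))) ∧
    ∀ i, B.mulVec (fun j => ((w i j : ℝ))) ∈ μ • M}

/-- For `0 < ε ≤ 1/2` and the explicit matrix `B` with columns
`(ε/2, ε/2, -ε)`, `(5ε/4, -3ε/4, -ε/2)`, `(1/(3ε²), 1/(3ε²), 1/(3ε²))`,
the cube `Π = [-ε,ε]³` satisfies `μ₁(Π, Bℤ³) = 1` and `μ₂(Π, Bℤ³) = 5/4`. -/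
theorem stmt_15 (ε : ℝ) (hε0 : 0 < ε) (hε : ε ≤ 1/2) :
    succMin 1
        !![ε/2, 5*ε/4,  1/(3*ε^2);
           ε/2, -3*ε/4, 1/(3*ε^2);
           -ε,  -ε/2,   1/(3*ε^2)]
        {z : Fin 3 → ℝ | ∀ i, |z i| ≤ ε} = 1 ∧
      succMin 2
        !![ε/2, 5*ε/4,  1/(3*ε^2);
           ε/2, -3*ε/4, 1/(3*ε^2);
           -ε,  -ε/2,   1/(3*ε^2)]
        {z : Fin 3 → ℝ | ∀ i, |z i| ≤ ε} = 5/4 := by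
  set B : Matrix (Fin 3) (Fin 3) ℝ :=
    !![ε/2, 5*ε/4,  1/(3*ε^2);
       ε/2, -3*ε/4, 1/(3*ε^2);
       -ε,  -ε/2,   1/(3*ε^2)] with hB
  set M : Set (Fin 3 → ℝ) := {z : Fin 3 → ℝ | ∀ i, |z i| ≤ ε} with hM
  constructor
  · -- μ₁ = 1
    unfold succMin
    apply le_antisymm
    · apply csInf_le ⟨0, fun x hx => hx.1.le⟩
      refine ⟨one_pos, ![![1,0,0]], ?_, ?_⟩
      · apply linearIndependent_unique_iff.mpr
        show B.mulVec _ ≠ 0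
        rw [hB, mulVecB]
        intro h
        have := congrFun h 2
        simp at this
        linarith
      · intro i
        rw [memc one_pos]
        fin_cases i
        rw [hB, mulVecB]
        intro j
        fin_cases j <;> simp <;>
          refine abs_le.mpr ⟨by linarith, by linarith⟩
    · apply le_csInf
      · refine ⟨1, one_pos, ![![1,0,0]], ?_, ?_⟩
        · apply linearIndependent_unique_iff.mpr
          show B.mulVec _ ≠ 0
          rw [hB, mulVecB]
          intro h
          have := congrFun h 2
          simp at this
          linarith
        · intro i
          rw [memc one_pos]
          fin_cases i
          rw [hB, mulVecB]
          intro j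
          fin_cases j <;> simp <;>
            refine abs_le.mpr ⟨by linarith, by linarith⟩
      · rintro μ ⟨hμ0, w, hli, hmem⟩
        by_contra hc
        push_neg at hc
        have hx := (memc hμ0 _).mp (hmem 0)
        rw [hB, mulVecB] at hx
        have h1 := hx 0
        have h2 := hx 1
        have h3 := hx 2
        simp only [Matrix.cons_val_zero, Matrix.cons_val_one, Matrix.head_cons,
          Matrix.cons_val_two, Matrix.tail_cons] at h1 h2 h3
        obtain ⟨hm, hn, hk⟩ := keyB ε μ hε0 hε hμ0 hc (w 0 0) (w 0 1) (w 0 2) h1 h2 h3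
        apply hli.ne_zero 0
        rw [hB, mulVecB]
        funext j
        fin_cases j <;> simp [hm, hn, hk]
  · -- μ₂ = 5/4
    unfold succMin
    have hmem54 : 0 < (5/4:ℝ) ∧ ∃ w : Fin 2 → (Fin 3 → ℤ),
        LinearIndependent ℝ (fun i => B.mulVec (fun j => ((w i j : ℝ)))) ∧
        ∀ i, B.mulVec (fun j => ((w i j : ℝ))) ∈ ((5:ℝ)/4) • M := by
      refine ⟨by norm_num, ![![1,0,0], ![0,1,0]], ?_, ?_⟩
      · rw [Fintype.linearIndependent_iff]
        intro g hg
        have c0 := congrFun hg 0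
        have c1 := congrFun hg 1
        rw [Fin.sum_univ_two] at c0 c1
        simp only [hB, mulVecB, Pi.add_apply, Pi.smul_apply, smul_eq_mul,
          Pi.zero_apply] at c0 c1
        norm_num at c0 c1
        have hg1 : g 1 * (2*ε) = 0 := by linarith
        have hg1' : g 1 = 0 := by
          rcases mul_eq_zero.mp hg1 with h | h
          · exact h
          · linarith
        have hg0 : g 0 * (ε/2) = 0 := by
          have e : ((![(1:ℤ),0,0] 2 : ℤ) : ℝ) = 0 := by simp
          rw [hg1', e] at c0; linarith
        have hg0' : g 0 = 0 := by
          rcases mul_eq_zero.mp hg0 with h | h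
          · exact h
          · linarith
        intro i
        fin_cases i
        · exact hg0'
        · exact hg1'
      · intro i
        rw [memc (by norm_num : (0:ℝ) < 5/4)]
        fin_cases i <;> rw [hB, mulVecB] <;> intro j <;>
          fin_cases j <;> simp <;>
            refine abs_le.mpr ⟨by linarith, by linarith⟩
    apply le_antisymm
    · exact csInf_le ⟨0, fun x hx => hx.1.le⟩ hmem54
    · refine le_csInf ⟨5/4, hmem54⟩ ?_
      rintro μ ⟨hμ0, w, hli, hmem⟩
      by_contra hc
      push_neg at hc
      have hzero : ∀ i : Fin 2, w i 1 = 0 ∧ w i 2 = 0 := by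
        intro i
        have hx := (memc hμ0 _).mp (hmem i)
        rw [hB, mulVecB] at hx
        have h1 := hx 0
        have h2 := hx 1
        have h3 := hx 2
        simp only [Matrix.cons_val_zero, Matrix.cons_val_one, Matrix.head_cons,
          Matrix.cons_val_two, Matrix.tail_cons] at h1 h2 h3
        exact keyA ε μ hε0 hε hμ0 hc (w i 0) (w i 1) (w i 2) h1 h2 h3
      have hvec : ∀ i : Fin 2, B.mulVec (fun j => ((w i j : ℝ))) =
          ![ε/2 * (w i 0 : ℝ), ε/2 * (w i 0 : ℝ), (-ε) * (w i 0 : ℝ)] := by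
        intro i
        rw [hB, mulVecB]
        funext j
        fin_cases j <;> simp [(hzero i).1, (hzero i).2]
      have hall := Fintype.linearIndependent_iff.mp hli
        ![(w 1 0 : ℝ), -(w 0 0 : ℝ)] (by
          rw [Fin.sum_univ_two]
          simp only [Matrix.cons_val_zero, Matrix.cons_val_one, Matrix.head_cons]
          rw [hvec 0, hvec 1]
          funext j
          fin_cases j <;> simp <;> ring)
      have h0 : (w 1 0 : ℝ) = 0 := by simpa using hall 0
      have h1 : (w 0 0 : ℝ) = 0 := by have := hall 1; simpa using this
      apply hli.ne_zero 0
      rw [hvec 0, h1]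
      funext j
      fin_cases j <;> simp
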